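/- In every decomposition of the digraph D with vertices {v_1, v_2, v_3, v_4, z} and arcs {v_1v_2, v_2v_3, v_2v_4, v_1z} into a k-bounded directed linear forest F_k (k >= 2) and a directed matching F_1, the arc v_1z belongs to F_1. Moreover, such a decomposition exists. -/

import Mathlib

open Finset

/-- Number of arcs of `F` entering `v` (in-degree). -/
def inDeg {V : Type*} [DecidableEq V] (F : Finset (V × V)) (v : V) : ℕ :=
  (F.filter (fun a => a.2 = v)).card

/-- Number of arcs of `F` leaving `v` (out-degree). -/
def outDeg {V : Type*} [DecidableEq V] (F : Finset (V × V)) (v : V) : ℕ :=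
  (F.filter (fun a => a.1 = v)).card

/-- A directed matching: every vertex is incident to at most one arc. -/
def IsDirectedMatching {V : Type*} [DecidableEq V] (F : Finset (V × V)) : Prop :=
  ∀ v, inDeg F v + outDeg F v ≤ 1

/-- A directed linear forest: in- and out-degrees at most one and no directed cycle. -/
def IsDLF {V : Type*} [DecidableEq V] (F : Finset (V × V)) : Prop :=
  (∀ v, inDeg F v ≤ 1) ∧ (∀ v, outDeg F v ≤ 1) ∧
    ∀ v : V, ¬ Relation.TransGen (fun u w => (u, w) ∈ F) v v

/-- `F` contains a directed walk with `n` arcs. -/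
def HasWalkOfLength {V : Type*} (F : Finset (V × V)) (n : ℕ) : Prop :=
  ∃ w : ℕ → V, ∀ i < n, (w i, w (i + 1)) ∈ F

/-- A `k`-bounded directed linear forest: each component path has at most `k` arcs. -/
def IsBoundedDLF {V : Type*} [DecidableEq V] (F : Finset (V × V)) (k : ℕ) : Prop :=
  IsDLF F ∧ ¬ HasWalkOfLength F (k + 1)

/-- Two arcs conflict if they share a vertex which is not the tail of both of them. -/
def ArcConflict {V : Type*} (a b : V × V) : Prop :=
  ∃ v, (v = a.1 ∨ v = a.2) ∧ (v = b.1 ∨ v = b.2) ∧ ¬(v = a.1 ∧ v = b.1)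

/-- An out-galaxy: a vertex-disjoint union of out-stars, i.e. no two distinct arcs
share a vertex that is not the tail of both. -/
def IsOutGalaxy {V : Type*} (F : Finset (V × V)) : Prop :=
  ∀ a ∈ F, ∀ b ∈ F, a ≠ b → ¬ ArcConflict a b

/-- A `k`-bounded out-galaxy: each out-star has at most `k` arcs. -/
def IsBoundedOutGalaxy {V : Type*} [DecidableEq V] (F : Finset (V × V)) (k : ℕ) : Prop :=
  IsOutGalaxy F ∧ ∀ v, outDeg F v ≤ k

/-- In the short `k`-in-forcer with vertices `v₁,v₂,v₃,v₄,z = 0,1,2,3,4`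
and arcs `v₁v₂, v₂v₃, v₂v₄, v₁z`, for every `k ≥ 2`, in every decomposition into a
`k`-bounded directed linear forest `F_k` and a directed matching `F₁` the arc `v₁z`
belongs to `F₁`; moreover such a decomposition exists. -/
lemma one_le_inDeg {V : Type*} [DecidableEq V] {F : Finset (V × V)} {a : V × V} {v : V}
    (ha : a ∈ F) (h : a.2 = v) : 1 ≤ inDeg F v := by
  apply Finset.card_pos.2 ⟨a, Finset.mem_filter.2 ⟨ha, h⟩⟩

lemma one_le_outDeg {V : Type*} [DecidableEq V] {F : Finset (V × V)} {a : V × V} {v : V}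
    (ha : a ∈ F) (h : a.1 = v) : 1 ≤ outDeg F v := by
  apply Finset.card_pos.2 ⟨a, Finset.mem_filter.2 ⟨ha, h⟩⟩

lemma two_le_outDeg {V : Type*} [DecidableEq V] {F : Finset (V × V)} {a b : V × V} {v : V}
    (ha : a ∈ F) (hb : b ∈ F) (hne : a ≠ b) (h1 : a.1 = v) (h2 : b.1 = v) :
    2 ≤ outDeg F v := by
  apply Finset.one_lt_card_iff.2
  exact ⟨a, b, Finset.mem_filter.2 ⟨ha, h1⟩, Finset.mem_filter.2 ⟨hb, h2⟩, hne⟩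

theorem stmt13 (k : ℕ) (hk : 2 ≤ k) (D : Finset (Fin 5 × Fin 5))
    (hD : D = {(0, 1), (1, 2), (1, 3), (0, 4)}) :
    (∀ Fk F1 : Finset (Fin 5 × Fin 5), Fk ∪ F1 = D → Disjoint Fk F1 →
        IsBoundedDLF Fk k → IsDirectedMatching F1 →
        ((0 : Fin 5), (4 : Fin 5)) ∈ F1) ∧
    (∃ Fk F1 : Finset (Fin 5 × Fin 5), Fk ∪ F1 = D ∧ Disjoint Fk F1 ∧
        IsBoundedDLF Fk k ∧ IsDirectedMatching F1) := by
  constructor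
  · intro Fk F1 hU hdisj hFk hF1
    obtain ⟨⟨hin, hout, _⟩, _⟩ := hFk
    have m01 : ((0,1) : Fin 5 × Fin 5) ∈ Fk ∪ F1 := by rw [hU, hD]; decide
    have m12 : ((1,2) : Fin 5 × Fin 5) ∈ Fk ∪ F1 := by rw [hU, hD]; decide
    have m13 : ((1,3) : Fin 5 × Fin 5) ∈ Fk ∪ F1 := by rw [hU, hD]; decide
    have m04 : ((0,4) : Fin 5 × Fin 5) ∈ Fk ∪ F1 := by rw [hU, hD]; decide
    rcases Finset.mem_union.1 m04 with h04 | h04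
    swap
    · exact h04
    exfalso
    -- matching contradiction helper
    have matchC : ∀ a b : Fin 5 × Fin 5, a ∈ F1 → b ∈ F1 → a ≠ b →
        (a.1 = 1 ∨ a.2 = 1) → (b.1 = 1 ∨ b.2 = 1) → False := by
      intro a b ha hb hne h1 h2
      have hm := hF1 1
      rcases h1 with h1 | h1 <;> rcases h2 with h2 | h2
      · have := two_le_outDeg ha hb hne h1 h2; omega
      · have := one_le_outDeg ha h1; have := one_le_inDeg hb h2; omega
      · have := one_le_inDeg ha h1; have := one_le_outDeg hb h2; omega
      · have hm2 := hF1 (a.2)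
        have h1' : 2 ≤ inDeg F1 1 := by
          apply Finset.one_lt_card_iff.2
          exact ⟨a, b, Finset.mem_filter.2 ⟨ha, h1⟩, Finset.mem_filter.2 ⟨hb, h2⟩, hne⟩
        omega
    -- (1,2) and (1,3): one in each
    have key12 : ((1,2) : Fin 5 × Fin 5) ∈ Fk → ((1,3) : Fin 5 × Fin 5) ∈ Fk → False := by
      intro h1 h2
      have := two_le_outDeg h1 h2 (by decide) (show ((1,2) : Fin 5 × Fin 5).1 = 1 from rfl)
        (show ((1,3) : Fin 5 × Fin 5).1 = 1 from rfl)
      have := hout 1; omega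
    have key01 : ((0,1) : Fin 5 × Fin 5) ∈ Fk → False := by
      intro h1
      have := two_le_outDeg h1 h04 (by decide) (show ((0,1) : Fin 5 × Fin 5).1 = 0 from rfl)
        (show ((0,4) : Fin 5 × Fin 5).1 = 0 from rfl)
      have := hout 0; omega
    have h01 : ((0,1) : Fin 5 × Fin 5) ∈ F1 := by
      rcases Finset.mem_union.1 m01 with h | h
      · exact absurd h (fun h => key01 h)
      · exact h
    rcases Finset.mem_union.1 m12 with h12 | h12 <;>
      rcases Finset.mem_union.1 m13 with h13 | h13
    · exact key12 h12 h13
    · exact matchC _ _ h01 h13 (by decide) (Or.inr rfl) (Or.inl rfl)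
    · exact matchC _ _ h01 h12 (by decide) (Or.inr rfl) (Or.inl rfl)
    · exact matchC _ _ h12 h13 (by decide) (Or.inl rfl) (Or.inl rfl)
  · refine ⟨{(0,1),(1,2)}, {(1,3),(0,4)}, by rw [hD]; decide, by decide, ?_, by unfold IsDirectedMatching; decide⟩
    refine ⟨⟨by decide, by decide, ?_⟩, ?_⟩
    · intro v hv
      have htr : Transitive (fun u w : Fin 5 => u < w) := fun a b c => lt_trans
      have hmono : ∀ u w : Fin 5, (u, w) ∈ ({(0,1),(1,2)} : Finset (Fin 5 × Fin 5)) → u < w := by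
        decide
      have h := Relation.TransGen.mono hmono v v hv
      rw [Relation.transGen_eq_self] at h
      exact lt_irrefl _ h
    · rintro ⟨w, hw⟩
      have h0 := hw 0 (by omega)
      have h1 := hw 1 (by omega)
      have h2 := hw 2 (by omega)
      have mem : ∀ a b : Fin 5, (a, b) ∈ ({(0,1),(1,2)} : Finset (Fin 5 × Fin 5)) →
          (a = 0 ∧ b = 1) ∨ (a = 1 ∧ b = 2) := by decide
      rcases mem _ _ h0 with ⟨a0, a1⟩ | ⟨a0, a1⟩ <;>
        rcases mem _ _ h1 with ⟨b1, b2⟩ | ⟨b1, b2⟩ <;>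
        rcases mem _ _ h2 with ⟨c2, c3⟩ | ⟨c2, c3⟩ <;>
        simp_all
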